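/- Let p ∈ Δ^{N−1} be a probability vector and σ a permutation of {1,…,N}. For every index 1 ≤ i ≤ N−1 with S_i(p) > 0, the uniform probability of the event { ω ∈ [0,1)^{N−1} : a(p, ω) = σ(i) } equals (p_{σ(i)} / S_i(p)) · Π_{j=1}^{i−1} (1 − α_j(p)), and this quantity equals p_{σ(i)}. -/

import Mathlib

open MeasureTheory Finset

noncomputable section

/-- Tail sum `S_i(p) = ∑_{j=i}^{N} p_{σ(j)}`, with `N = n+1` and indices as `Fin (n+1)`. -/
def tailSum {n : ℕ} (σ : Equiv.Perm (Fin (n + 1))) (p : Fin (n + 1) → ℝ)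
    (i : Fin (n + 1)) : ℝ :=
  ∑ j ∈ Finset.Ici i, p (σ j)

/-- Threshold `α_i(p) = p_{σ(i)} / S_i(p)` if `S_i(p) > 0`, else `p_{σ(i)}`. -/
def threshold {n : ℕ} (σ : Equiv.Perm (Fin (n + 1))) (p : Fin (n + 1) → ℝ)
    (i : Fin (n + 1)) : ℝ :=
  if 0 < tailSum σ p i then p (σ i) / tailSum σ p i else p (σ i)

open Classical in
/-- The action `a(p, ω)`: `σ(i)` for the smallest index `i` (among the first `n = N - 1`
indices) with `ω_i < α_i(p)`, and `σ(N)` if no such index exists. -/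
def act {n : ℕ} (σ : Equiv.Perm (Fin (n + 1))) (p : Fin (n + 1) → ℝ)
    (ω : Fin n → ℝ) : Fin (n + 1) :=
  if h : ∃ k : Fin n, ω k < threshold σ p k.castSucc then
    σ (Fin.find (fun i : Fin n => ω i < threshold σ p i.castSucc) h).castSucc
  else σ (Fin.last n)

/-- The uniform (product Lebesgue) probability measure on `[0,1)^n`. -/
def unif (n : ℕ) : Measure (Fin n → ℝ) :=
  Measure.pi fun _ => volume.restrict (Set.Ico (0 : ℝ) 1)

lemma tailSum_zero {n : ℕ} (σ : Equiv.Perm (Fin (n + 1))) (p : Fin (n + 1) → ℝ)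
    (hsum : ∑ k, p k = 1) : tailSum σ p 0 = 1 := by
  unfold tailSum
  rw [show (Finset.Ici (0 : Fin (n+1))) = Finset.univ by ext a; simp [Fin.le_def]]
  rw [Equiv.sum_comp σ p, hsum]

lemma tailSum_anti {n : ℕ} (σ : Equiv.Perm (Fin (n + 1))) (p : Fin (n + 1) → ℝ)
    (hp : ∀ k, 0 ≤ p k) {a b : Fin (n+1)} (hab : a ≤ b) :
    tailSum σ p b ≤ tailSum σ p a := by
  unfold tailSum
  apply Finset.sum_le_sum_of_subset_of_nonneg
  · intro x hx; simp only [Finset.mem_Ici] at *; exact le_trans hab hx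
  · intro x _ _; exact hp _

lemma tailSum_step {n : ℕ} (σ : Equiv.Perm (Fin (n + 1))) (p : Fin (n + 1) → ℝ)
    (j : Fin n) : tailSum σ p j.castSucc = p (σ j.castSucc) + tailSum σ p j.succ := by
  unfold tailSum
  rw [show Finset.Ici j.castSucc = insert j.castSucc (Finset.Ici j.succ) by
    ext a; simp [Fin.le_def, Fin.ext_iff]; omega]
  rw [Finset.sum_insert (by simp [Fin.le_def])]

/-- For every index `1 ≤ i ≤ N-1` with `S_i(p) > 0`, the uniform probability of the event
`{ω ∈ [0,1)^{N-1} : a(p, ω) = σ(i)}` equals `(p_{σ(i)} / S_i(p)) · ∏_{j<i} (1 − α_j(p))`,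
and this quantity equals `p_{σ(i)}`. -/
theorem prob_act_eq (n : ℕ) (σ : Equiv.Perm (Fin (n + 1)))
    (p : Fin (n + 1) → ℝ) (hp : ∀ k, 0 ≤ p k) (hsum : ∑ k, p k = 1)
    (i : Fin n) (hS : 0 < tailSum σ p i.castSucc) :
    unif n {ω | act σ p ω = σ i.castSucc} =
      ENNReal.ofReal ((p (σ i.castSucc) / tailSum σ p i.castSucc) *
        ∏ j ∈ Finset.Iio i, (1 - threshold σ p j.castSucc)) ∧
    (p (σ i.castSucc) / tailSum σ p i.castSucc) *
        ∏ j ∈ Finset.Iio i, (1 - threshold σ p j.castSucc) = p (σ i.castSucc) := by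
  classical
  set S : Fin (n+1) → ℝ := tailSum σ p with hSdef
  -- positivity of tail sums up to i
  have hSpos : ∀ j : Fin n, j ≤ i → 0 < S j.castSucc := fun j hj =>
    lt_of_lt_of_le hS (tailSum_anti σ p hp (Fin.castSucc_le_castSucc_iff.mpr hj))
  have htS : ∀ j : Fin n, 0 ≤ S j.succ := by
    intro j; exact Finset.sum_nonneg fun k _ => hp _
  -- threshold formula and bounds for j ≤ i
  have hth : ∀ j : Fin n, j ≤ i → threshold σ p j.castSucc = p (σ j.castSucc) / S j.castSucc := by
    intro j hj; unfold threshold; rw [if_pos (hSpos j hj)]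
  have hone : ∀ j : Fin n, j ≤ i →
      1 - threshold σ p j.castSucc = S j.succ / S j.castSucc := by
    intro j hj
    rw [hth j hj]
    have h1 := tailSum_step σ p j
    have h2 := (hSpos j hj).ne'
    field_simp
    linarith [h1]
  -- bounds on threshold
  have hth01 : ∀ j : Fin n, j ≤ i → 0 ≤ threshold σ p j.castSucc ∧ threshold σ p j.castSucc ≤ 1 := by
    intro j hj
    rw [hth j hj]
    constructor
    · exact div_nonneg (hp _) (hSpos j hj).le
    · rw [div_le_one (hSpos j hj)]
      have := tailSum_step σ p j
      have := htS j
      linarith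
  -- telescoping product
  have key : ∀ m : ℕ, ∀ hm : m < n, m ≤ i.val →
      ∏ j ∈ Finset.Iio (⟨m, hm⟩ : Fin n), (1 - threshold σ p j.castSucc) =
        S (⟨m, hm⟩ : Fin n).castSucc := by
    intro m
    induction m with
    | zero =>
      intro hm _
      rw [show (Finset.Iio (⟨0, hm⟩ : Fin n)) = ∅ by ext a; simp [Fin.lt_def]]
      simp only [Finset.prod_empty]
      rw [show ((⟨0, hm⟩ : Fin n).castSucc) = 0 by rfl]
      exact (tailSum_zero σ p hsum).symm
    | succ m ih =>
      intro hm hmi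
      have hm' : m < n := Nat.lt_of_succ_lt hm
      rw [show (Finset.Iio (⟨m+1, hm⟩ : Fin n)) = insert ⟨m, hm'⟩ (Finset.Iio ⟨m, hm'⟩) by
        ext a; simp only [Finset.mem_Iio, Finset.mem_insert, Fin.lt_def, Fin.ext_iff]; omega]
      rw [Finset.prod_insert (by simp [Fin.lt_def])]
      rw [ih hm' (by omega)]
      have hle : (⟨m, hm'⟩ : Fin n) ≤ i := by simp [Fin.le_def]; omega
      rw [hone _ hle]
      rw [div_mul_cancel₀ _ (hSpos _ hle).ne']
      exact congrArg S (Fin.ext rfl)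
  have hIioi : (Finset.Iio i) = Finset.Iio (⟨i.val, i.isLt⟩ : Fin n) := by congr
  have hprod : ∏ j ∈ Finset.Iio i, (1 - threshold σ p j.castSucc) = S i.castSucc := by
    rw [hIioi, key i.val i.isLt le_rfl]
  -- part 2
  have part2 : (p (σ i.castSucc) / S i.castSucc) *
      ∏ j ∈ Finset.Iio i, (1 - threshold σ p j.castSucc) = p (σ i.castSucc) := by
    rw [hprod, div_mul_cancel₀ _ hS.ne']
  refine ⟨?_, part2⟩
  -- the measure computation
  have hα : True := trivial
  set s : Fin n → Set ℝ := fun j =>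
    if j < i then Set.Ici (threshold σ p j.castSucc)
    else if j = i then Set.Iio (threshold σ p i.castSucc) else Set.univ with hs
  have hevent : {ω : Fin n → ℝ | act σ p ω = σ i.castSucc} = Set.pi Set.univ s := by
    ext ω
    simp only [Set.mem_setOf_eq, Set.mem_pi, Set.mem_univ, forall_true_left]
    have hfind : act σ p ω = σ i.castSucc ↔
        (ω i < threshold σ p i.castSucc ∧
          ∀ j : Fin n, ω j < threshold σ p j.castSucc → i ≤ j) := by
      unfold act
      split_ifs with h
      · rw [σ.injective.eq_iff, (Fin.castSucc_injective n).eq_iff, Fin.find_eq_iff]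
        constructor
        · rintro ⟨hi, hmin⟩
          exact ⟨hi, fun j hj => not_lt.mp (fun hlt => hmin j hlt hj)⟩
        · rintro ⟨hi, hmin⟩
          exact ⟨hi, fun j hlt hj => absurd (hmin j hj) (not_le.mpr hlt)⟩
      · constructor
        · intro h'
          exact absurd (σ.injective h'.symm) (Fin.ne_of_lt (Fin.castSucc_lt_last i))
        · rintro ⟨hi, _⟩
          exact absurd ⟨i, hi⟩ h
    rw [hfind]
    constructor
    · rintro ⟨hi, hmin⟩ j
      by_cases hji : j < i
      · simp only [hs, if_pos hji, Set.mem_Ici]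
        by_contra hc
        push_neg at hc
        exact absurd (hmin j hc) (not_le.mpr hji)
      · by_cases hje : j = i
        · simp only [hs, if_neg hji, if_pos hje, Set.mem_Iio]; rw [hje]; exact hi
        · simp only [hs, if_neg hji, if_neg hje]; trivial
    · intro hall
      have hi := hall i
      simp only [hs, lt_irrefl, if_neg (lt_irrefl i), if_pos rfl, Set.mem_Iio] at hi
      refine ⟨hi, fun j hj => ?_⟩
      by_contra hc
      push_neg at hc
      have hji : j < i := hc
      have := hall j
      simp only [hs, if_pos hji, Set.mem_Ici] at this
      exact absurd hj (not_lt.mpr this)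
  rw [hevent]
  unfold unif
  rw [Measure.pi_pi]
  -- measures of individual sets
  have μIio : ∀ a : ℝ, 0 ≤ a → a ≤ 1 →
      (volume.restrict (Set.Ico (0:ℝ) 1)) (Set.Iio a) = ENNReal.ofReal a := by
    intro a h0 h1
    rw [Measure.restrict_apply measurableSet_Iio]
    rw [show Set.Iio a ∩ Set.Ico (0:ℝ) 1 = Set.Ico 0 a by
      ext x; simp only [Set.mem_inter_iff, Set.mem_Iio, Set.mem_Ico]
      constructor
      · rintro ⟨h, h', _⟩; exact ⟨h', h⟩
      · rintro ⟨h', h⟩; exact ⟨h, h', lt_of_lt_of_le h h1⟩]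
    rw [Real.volume_Ico, sub_zero]
  have μIci : ∀ a : ℝ, 0 ≤ a → a ≤ 1 →
      (volume.restrict (Set.Ico (0:ℝ) 1)) (Set.Ici a) = ENNReal.ofReal (1 - a) := by
    intro a h0 h1
    rw [Measure.restrict_apply measurableSet_Ici]
    rw [show Set.Ici a ∩ Set.Ico (0:ℝ) 1 = Set.Ico a 1 by
      ext x; simp only [Set.mem_inter_iff, Set.mem_Ici, Set.mem_Ico]
      constructor
      · rintro ⟨h, _, h'⟩; exact ⟨h, h'⟩
      · rintro ⟨h, h'⟩; exact ⟨h, le_trans h0 h, h'⟩]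
    rw [Real.volume_Ico]
  have μuniv : (volume.restrict (Set.Ico (0:ℝ) 1)) Set.univ = 1 := by
    rw [Measure.restrict_apply MeasurableSet.univ, Set.univ_inter, Real.volume_Ico]
    norm_num
  -- compute the product
  have hsub : insert i (Finset.Iio i) ⊆ Finset.univ := Finset.subset_univ _
  have hprodμ : ∏ j : Fin n, (volume.restrict (Set.Ico (0:ℝ) 1)) (s j) =
      ∏ j ∈ insert i (Finset.Iio i), (volume.restrict (Set.Ico (0:ℝ) 1)) (s j) := by
    refine (Finset.prod_subset hsub ?_).symm
    intro j _ hj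
    simp only [Finset.mem_insert, Finset.mem_Iio, not_or, not_lt] at hj
    have hji : ¬ j < i := not_lt.mpr hj.2
    simp only [hs, if_neg hji, if_neg hj.1]
    exact μuniv
  rw [hprodμ, Finset.prod_insert (by simp)]
  have hii : s i = Set.Iio (threshold σ p i.castSucc) := by simp [hs]
  have h0i := hth01 i le_rfl
  rw [hii, μIio _ h0i.1 h0i.2]
  have hrest : ∏ j ∈ Finset.Iio i, (volume.restrict (Set.Ico (0:ℝ) 1)) (s j) =
      ∏ j ∈ Finset.Iio i, ENNReal.ofReal (1 - threshold σ p j.castSucc) := by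
    apply Finset.prod_congr rfl
    intro j hj
    rw [Finset.mem_Iio] at hj
    have h01 := hth01 j hj.le
    simp only [hs, if_pos hj]
    exact μIci _ h01.1 h01.2
  rw [hrest]
  rw [← ENNReal.ofReal_prod_of_nonneg (fun j hj => by
    rw [Finset.mem_Iio] at hj
    have h01 := hth01 j hj.le
    linarith [h01.2])]
  rw [← ENNReal.ofReal_mul h0i.1]
  congr 1
  rw [hth i le_rfl]
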